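/- Let p ≥ 1 be an integer, H > 0 and R_0 > 0. Let (g_k)_{k≥0} be positive reals and let (A_k)_{k≥0} be defined by A_0 = 0 and A_{k+1} = A_k + a_{k+1}, where each a_{k+1} > 0 satisfies a_{k+1}²/(A_k + a_{k+1}) = (1/H)^{1/p} g_k^{(1−p)/p}. Suppose that ∑_{i=0}^{k−1} A_{i+1} g_i^{(p+1)/p} ≤ H^{1/p} R_0² for every k ≥ 1. Then for every k ≥ 1, A_k ≥ (1/4)^{(p+1)/2} H^{−1} R_0^{−(p−1)} (1 + 2(k−1)/(p+1))^{(3p+1)/2}. -/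

import Mathlib

lemma stmt7_bern {q w : ℝ} (hq : 1 ≤ q) (hw : 1 ≤ w) :
    w ^ q ≤ (w - 1/q) ^ q + w ^ (q - 1) := by
  have hq0 : (0:ℝ) < q := by linarith
  have hw0 : (0:ℝ) < w := by linarith
  have h1q : 1/q ≤ 1 := by rw [div_le_one hq0]; exact hq
  have hy : 0 ≤ w - 1/q := by linarith
  have hs : (-1:ℝ) ≤ (w - 1/q)/w - 1 := by
    have : 0 ≤ (w - 1/q)/w := div_nonneg hy hw0.le
    linarith
  have hB := one_add_mul_self_le_rpow_one_add hs hq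
  rw [show (1 + ((w - 1/q)/w - 1)) = (w - 1/q)/w by ring] at hB
  rw [Real.div_rpow hy hw0.le] at hB
  have hwq : (0:ℝ) < w ^ q := Real.rpow_pos_of_pos hw0 q
  have h2 : (1 + q * ((w - 1/q)/w - 1)) * w ^ q ≤ (w - 1/q) ^ q := by
    calc (1 + q * ((w - 1/q)/w - 1)) * w ^ q
        ≤ ((w - 1/q) ^ q / w ^ q) * w ^ q := by
          exact mul_le_mul_of_nonneg_right hB hwq.le
      _ = (w - 1/q) ^ q := div_mul_cancel₀ _ hwq.ne'
  have hws : w ^ (q-1) = w ^ q / w := by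
    rw [Real.rpow_sub hw0, Real.rpow_one]
  have h3 : (1 + q * ((w - 1/q)/w - 1)) * w ^ q = w ^ q - w ^ q / w := by
    field_simp
    ring
  rw [h3] at h2
  rw [hws]
  linarith

lemma stmt7_hmono {q s t : ℝ} (hq : 1 ≤ q) (hs : 1 ≤ s) (hst : s < t) :
    s ^ q - s ^ (q - 1) < t ^ q - t ^ (q - 1) := by
  have hs0 : (0:ℝ) < s := by linarith
  have ht0 : (0:ℝ) < t := by linarith
  have hid : ∀ x : ℝ, 0 < x → x ^ q - x ^ (q-1) = x ^ (q-1) * (x - 1) := by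
    intro x hx
    have h : x ^ (q-1) * x = x ^ q := by
      rw [← Real.rpow_add_one hx.ne' (q-1)]
      norm_num
    rw [← h]; ring
  rw [hid s hs0, hid t ht0]
  have h1 : s ^ (q-1) ≤ t ^ (q-1) := Real.rpow_le_rpow hs0.le hst.le (by linarith)
  have h2 : (0:ℝ) < t ^ (q-1) := Real.rpow_pos_of_pos ht0 _
  have h3 := mul_le_mul_of_nonneg_right h1 (by linarith : (0:ℝ) ≤ s - 1)
  have h4 := mul_lt_mul_of_pos_left (by linarith : s - 1 < t - 1) h2
  linarith

lemma stmt7_sumf {q : ℝ} (hq : 1 ≤ q) : ∀ m : ℕ,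
    (1 + (m:ℝ)/q) ^ q ≤ ∑ i ∈ Finset.range (m+1), (1 + (i:ℝ)/q) ^ (q - 1) := by
  have hq0 : (0:ℝ) < q := by linarith
  intro m
  induction m with
  | zero => simp
  | succ n ih =>
    rw [Finset.sum_range_succ]
    have hw : (1:ℝ) ≤ 1 + ((n:ℝ)+1)/q := by
      have : 0 ≤ ((n:ℝ)+1)/q := by positivity
      linarith
    have hb := stmt7_bern hq hw
    have he : 1 + ((n:ℝ)+1)/q - 1/q = 1 + (n:ℝ)/q := by field_simp; ring
    rw [he] at hb
    push_cast
    linarith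

lemma stmt7_sqrt (lam : ℕ → ℝ) (a A : ℕ → ℝ) (hA0 : A 0 = 0) (ha : ∀ k, 0 < a (k+1))
    (hArec : ∀ k, A (k+1) = A k + a (k+1))
    (haeq : ∀ k, a (k+1)^2 / (A k + a (k+1)) = lam k) :
    ∀ k, (∑ i ∈ Finset.range k, Real.sqrt (lam i)) / 2 ≤ Real.sqrt (A k) := by
  have hAnn : ∀ k, 0 ≤ A k := by
    intro k
    induction k with
    | zero => rw [hA0]
    | succ n ihn => rw [hArec n]; have := ha n; linarith
  have hApos : ∀ k, 0 < A (k+1) := by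
    intro k; rw [hArec k]; have := ha k; have := hAnn k; linarith
  have hstep : ∀ k, Real.sqrt (A k) + Real.sqrt (lam k) / 2 ≤ Real.sqrt (A (k+1)) := by
    intro k
    have h := haeq k
    rw [← hArec k] at h
    have hsq : a (k+1)^2 = lam k * A (k+1) := by
      rw [div_eq_iff (hApos k).ne'] at h
      linarith [h]
    have e4 : a (k+1) = Real.sqrt (lam k) * Real.sqrt (A (k+1)) := by
      have h1 : a (k+1) = Real.sqrt (a (k+1)^2) := (Real.sqrt_sq (ha k).le).symm
      rw [h1, hsq, Real.sqrt_mul _ (A (k+1))]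
      have : (0:ℝ) ≤ lam k := by
        nlinarith [sq_nonneg (a (k+1)), hApos k, hsq, ha k]
      exact this
    have e1 : Real.sqrt (A (k+1)) ^ 2 = A (k+1) := Real.sq_sqrt (hAnn (k+1))
    have e2 : Real.sqrt (A k) ^ 2 = A k := Real.sq_sqrt (hAnn k)
    have e3 : A (k+1) - A k = a (k+1) := by rw [hArec k]; ring
    have e5 : Real.sqrt (A k) ≤ Real.sqrt (A (k+1)) := by
      apply Real.sqrt_le_sqrt; have := ha k; linarith
    have e6 : 0 < Real.sqrt (A (k+1)) := Real.sqrt_pos.mpr (hApos k)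
    have e7 : 0 ≤ Real.sqrt (lam k) := Real.sqrt_nonneg _
    nlinarith [sq_nonneg (Real.sqrt (A (k+1)) - Real.sqrt (A k)), e6]
  intro k
  induction k with
  | zero => simp [hA0]
  | succ n ihn =>
    rw [Finset.sum_range_succ]
    have := hstep n
    linarith

lemma stmt7_master (p : ℕ) (hp2 : 2 ≤ p) (H R0 : ℝ) (hH : 0 < H) (hR0 : 0 < R0)
    (g : ℕ → ℝ) (hg : ∀ k, 0 < g k) (A : ℕ → ℝ) (hApos : ∀ k, 0 < A (k+1))
    (k : ℕ) (hk : 1 ≤ k)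
    (hsum_k : ∑ i ∈ Finset.range k, A (i + 1) * g i ^ (((p : ℝ) + 1) / p) ≤
        H ^ ((1 : ℝ) / p) * R0 ^ 2)
    (hA : (∑ i ∈ Finset.range k,
        Real.sqrt ((1/H) ^ ((1:ℝ)/p) * g i ^ ((1-(p:ℝ))/p))) ^ 2 / 4 ≤ A k) :
    (1/4) * (1/H) ^ ((1:ℝ)/(p:ℝ)) *
      (H ^ ((1:ℝ)/(p:ℝ)) * R0 ^ 2) ^ (-(((p:ℝ)-1)/((p:ℝ)+1))) *
      (∑ i ∈ Finset.range k, (A (i+1)) ^ (((p:ℝ)-1)/(3*(p:ℝ)+1))) ^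
        ((3*(p:ℝ)+1)/((p:ℝ)+1)) ≤ A k := by
  have hpr2 : (2:ℝ) ≤ (p:ℝ) := by exact_mod_cast hp2
  set pr : ℝ := (p:ℝ) with hprdef
  have hpr0 : (0:ℝ) < pr := by linarith
  have hiH : (0:ℝ) < 1/H := by positivity
  set α : ℝ := (pr-1)/(3*pr+1) with hαdef
  have hα0 : 0 < α := by apply div_pos <;> linarith
  have hα1 : α < 1 := by rw [div_lt_one (by linarith)]; linarith
  have h1α : (0:ℝ) < 1 - α := by linarith
  have hnepr : pr ≠ 0 := ne_of_gt hpr0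
  have hne1 : pr + 1 ≠ 0 := by intro h; nlinarith
  have hne3p : 3*pr + 1 ≠ 0 := by intro h; nlinarith
  have hne2p2 : 2*pr + 2 ≠ 0 := by intro h; nlinarith
  set e2 : ℝ := (pr+1)/pr with he2def
  set e3 : ℝ := (1-pr)/pr * (1/2) with he3def
  set c2 : ℝ := (1/H) ^ ((1:ℝ)/pr * (1/2)) with hc2def
  have hc2pos : 0 < c2 := Real.rpow_pos_of_pos hiH _
  set S : ℝ := ∑ i ∈ Finset.range k, (A (i+1)) ^ α with hSdef
  set Qs : ℝ := ∑ i ∈ Finset.range k, g i ^ e3 with hQdef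
  set K : ℝ := H ^ ((1:ℝ)/pr) * R0 ^ 2 with hKdef
  have hK0 : 0 < K := by
    apply mul_pos (Real.rpow_pos_of_pos hH _); positivity
  -- rewrite the sqrt sum
  have hsqrt_eq : ∀ i, Real.sqrt ((1/H) ^ ((1:ℝ)/pr) * g i ^ ((1-pr)/pr))
      = c2 * g i ^ e3 := by
    intro i
    rw [Real.sqrt_eq_rpow, Real.mul_rpow (Real.rpow_nonneg hiH.le _)
      (Real.rpow_nonneg (hg i).le _), ← Real.rpow_mul hiH.le, ← Real.rpow_mul (hg i).le]
  rw [Finset.sum_congr rfl (fun i _ => hsqrt_eq i), ← Finset.mul_sum] at hA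
  -- Qs ≥ 0, S > 0
  have hQs0 : 0 ≤ Qs := Finset.sum_nonneg fun i _ => Real.rpow_nonneg (hg i).le _
  have hSpos : 0 < S := by
    apply Finset.sum_pos (fun i _ => Real.rpow_pos_of_pos (hApos i) _)
    exact Finset.nonempty_range_iff.mpr (by omega)
  -- Hölder
  have hpq : Real.HolderConjugate (1/α) (1/(1-α)) := by
    rw [Real.holderConjugate_iff]
    constructor
    · rw [lt_div_iff₀ hα0]; linarith
    · simp only [one_div, inv_inv]; ring
  have holder := Real.inner_le_Lp_mul_Lq_of_nonneg (s := Finset.range k)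
    (f := fun i => (A (i+1) * g i ^ e2) ^ α) (g := fun i => (g i ^ e3) ^ (1-α)) hpq
    (fun i _ => Real.rpow_nonneg (mul_nonneg (hApos i).le (Real.rpow_nonneg (hg i).le _)) _)
    (fun i _ => Real.rpow_nonneg (Real.rpow_nonneg (hg i).le _) _)
  have hterm : ∀ i, (A (i+1) * g i ^ e2) ^ α * (g i ^ e3) ^ (1-α) = (A (i+1)) ^ α := by
    intro i
    rw [Real.mul_rpow (hApos i).le (Real.rpow_nonneg (hg i).le _),
      ← Real.rpow_mul (hg i).le, ← Real.rpow_mul (hg i).le, mul_assoc,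
      ← Real.rpow_add (hg i),
      show e2*α + e3*(1-α) = 0 from by
        rw [he2def, he3def, hαdef]; field_simp; ring,
      Real.rpow_zero, mul_one]
  have hf1 : ∀ i, ((A (i+1) * g i ^ e2) ^ α) ^ (1/α) = A (i+1) * g i ^ e2 := by
    intro i
    rw [← Real.rpow_mul (mul_nonneg (hApos i).le (Real.rpow_nonneg (hg i).le _)),
      mul_one_div_cancel hα0.ne', Real.rpow_one]
  have hg1 : ∀ i, ((g i ^ e3) ^ (1-α)) ^ (1/(1-α)) = g i ^ e3 := by
    intro i
    rw [← Real.rpow_mul (Real.rpow_nonneg (hg i).le _),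
      mul_one_div_cancel h1α.ne', Real.rpow_one]
  rw [Finset.sum_congr rfl (fun i _ => hterm i),
    Finset.sum_congr rfl (fun i _ => hf1 i),
    Finset.sum_congr rfl (fun i _ => hg1 i),
    one_div_one_div, one_div_one_div] at holder
  -- holder : S ≤ (∑ A g^e2)^α * Qs^(1-α)
  have hP0 : 0 ≤ ∑ i ∈ Finset.range k, A (i+1) * g i ^ e2 :=
    Finset.sum_nonneg fun i _ => mul_nonneg (hApos i).le (Real.rpow_nonneg (hg i).le _)
  have hPK : (∑ i ∈ Finset.range k, A (i+1) * g i ^ e2) ^ α ≤ K ^ α :=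
    Real.rpow_le_rpow hP0 hsum_k hα0.le
  have h1 : S ≤ K ^ α * Qs ^ (1-α) := by
    calc S ≤ (∑ i ∈ Finset.range k, A (i+1) * g i ^ e2) ^ α * Qs ^ (1-α) := holder
      _ ≤ K ^ α * Qs ^ (1-α) := by
          apply mul_le_mul_of_nonneg_right hPK (Real.rpow_nonneg hQs0 _)
  have hKα : (0:ℝ) < K ^ α := Real.rpow_pos_of_pos hK0 _
  have h2 : S / K ^ α ≤ Qs ^ (1-α) := by
    rw [div_le_iff₀ hKα]; rw [mul_comm (K^α)] at h1; exact h1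
  have hX0 : 0 < S / K ^ α := div_pos hSpos hKα
  have h3 : (S / K ^ α) ^ (1/(1-α)) ≤ Qs := by
    have h := Real.rpow_le_rpow hX0.le h2 (by positivity : (0:ℝ) ≤ 1/(1-α))
    rwa [← Real.rpow_mul hQs0, mul_one_div_cancel h1α.ne', Real.rpow_one] at h
  -- square comparison
  set X : ℝ := (S / K ^ α) ^ (1/(1-α)) with hXdef
  have hXpos : 0 < X := Real.rpow_pos_of_pos hX0 _
  have h4 : (c2 * X) ^ 2 / 4 ≤ A k := by
    have hmul : c2 * X ≤ c2 * Qs := mul_le_mul_of_nonneg_left h3 hc2pos.le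
    have h := pow_le_pow_left₀ (by positivity) hmul 2
    linarith
  -- identify (c2*X)^2/4 with the claimed quantity
  have hc2sq : c2 ^ 2 = (1/H) ^ ((1:ℝ)/pr) := by
    rw [hc2def, sq, ← Real.rpow_add hiH,
      show ((1:ℝ)/pr * (1/2) + (1:ℝ)/pr * (1/2)) = (1:ℝ)/pr from by ring]
  have h1a : 1 - α = (2*pr+2)/(3*pr+1) := by
    rw [hαdef]; field_simp; ring
  have E1 : 1/(1-α) * ((2:ℕ):ℝ) = (3*pr+1)/(pr+1) := by
    push_cast
    rw [h1a, one_div_div, div_mul_eq_mul_div, div_eq_div_iff hne2p2 hne1]; ring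
  have E2 : α * ((3*pr+1)/(pr+1)) = (pr-1)/(pr+1) := by
    rw [hαdef, div_mul_div_comm, div_eq_div_iff (mul_ne_zero hne3p hne1) hne1]; ring
  have hX2 : X ^ 2 = S ^ ((3*pr+1)/(pr+1)) * K ^ (-((pr-1)/(pr+1))) := by
    rw [hXdef, ← Real.rpow_natCast ((S / K ^ α) ^ (1/(1-α))) 2,
      ← Real.rpow_mul hX0.le, Real.div_rpow hSpos.le hKα.le,
      ← Real.rpow_mul hK0.le, E1, E2, Real.rpow_neg hK0.le, div_eq_mul_inv]
  calc (1/4) * (1/H) ^ ((1:ℝ)/pr) * K ^ (-((pr-1)/(pr+1))) * S ^ ((3*pr+1)/(pr+1))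
      = (c2 * X) ^ 2 / 4 := by
        rw [mul_pow, hc2sq, hX2]; ring
    _ ≤ A k := h4

theorem stmt_7 (p : ℕ) (hp : 1 ≤ p) (H R0 : ℝ) (hH : 0 < H) (hR0 : 0 < R0)
    (g : ℕ → ℝ) (hg : ∀ k, 0 < g k)
    (a A : ℕ → ℝ) (hA0 : A 0 = 0) (ha : ∀ k, 0 < a (k + 1))
    (hArec : ∀ k, A (k + 1) = A k + a (k + 1))
    (haeq : ∀ k, a (k + 1) ^ 2 / (A k + a (k + 1)) =
      (1 / H) ^ ((1 : ℝ) / p) * g k ^ ((1 - (p : ℝ)) / p))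
    (hsum : ∀ k : ℕ, 1 ≤ k →
      ∑ i ∈ Finset.range k, A (i + 1) * g i ^ (((p : ℝ) + 1) / p) ≤
        H ^ ((1 : ℝ) / p) * R0 ^ 2) :
    ∀ k : ℕ, 1 ≤ k →
      A k ≥ ((1 : ℝ) / 4) ^ (((p : ℝ) + 1) / 2) * H⁻¹ * R0 ^ (-((p : ℝ) - 1)) *
        (1 + 2 * ((k : ℝ) - 1) / ((p : ℝ) + 1)) ^ ((3 * (p : ℝ) + 1) / 2) := by
  have hAnn : ∀ j, 0 ≤ A j := by
    intro j; induction j with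
    | zero => rw [hA0]
    | succ n ihn => rw [hArec n]; have := ha n; linarith
  have hApos : ∀ j, 0 < A (j + 1) := by
    intro j; rw [hArec j]; have h1 := ha j; have h2 := hAnn j; linarith
  have hsqrt := stmt7_sqrt
    (fun i => (1 / H) ^ ((1 : ℝ) / p) * g i ^ ((1 - (p : ℝ)) / p)) a A hA0 ha hArec haeq
  have hAq : ∀ j, (∑ i ∈ Finset.range j,
      Real.sqrt ((1 / H) ^ ((1 : ℝ) / p) * g i ^ ((1 - (p : ℝ)) / p))) ^ 2 / 4 ≤ A j := by
    intro j
    have h1 := hsqrt j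
    have h2 : Real.sqrt (A j) ^ 2 = A j := Real.sq_sqrt (hAnn j)
    have h3 : 0 ≤ ∑ i ∈ Finset.range j,
        Real.sqrt ((1 / H) ^ ((1 : ℝ) / p) * g i ^ ((1 - (p : ℝ)) / p)) :=
      Finset.sum_nonneg fun i _ => Real.sqrt_nonneg _
    nlinarith [h1, h2, h3, Real.sqrt_nonneg (A j)]
  rcases Nat.lt_or_ge p 2 with hplt | hp2
  · -- p = 1
    have hp1 : p = 1 := by omega
    subst hp1
    intro k hk
    have h := hAq k
    simp only [Nat.cast_one, div_one, sub_self, zero_div, Real.rpow_one, Real.rpow_zero,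
      mul_one] at h
    rw [Finset.sum_const, Finset.card_range, nsmul_eq_mul] at h
    rw [ge_iff_le]
    simp only [Nat.cast_one]
    rw [show ((1:ℝ) + 1) / 2 = (1:ℝ) by norm_num,
      show -((1:ℝ) - 1) = (0:ℝ) by norm_num,
      show (3 * (1:ℝ) + 1) / 2 = ((2:ℕ):ℝ) by norm_num,
      show (1:ℝ) + 2 * ((k:ℝ) - 1) / ((1:ℝ) + 1) = (k:ℝ) by ring]
    rw [Real.rpow_one, Real.rpow_zero, Real.rpow_natCast]
    have hs : Real.sqrt (1 / H) ^ 2 = 1 / H := Real.sq_sqrt (by positivity)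
    have h2 : ((k:ℝ) * Real.sqrt (1 / H)) ^ 2 = (k:ℝ) ^ 2 * (1 / H) := by
      rw [mul_pow, hs]
    rw [h2, one_div] at h
    linarith [h]
  · -- 2 ≤ p
    have hmaster := fun k hk => stmt7_master p hp2 H R0 hH hR0 g hg A hApos k hk
      (hsum k hk) (hAq k)
    have hpr2 : (2:ℝ) ≤ (p:ℝ) := by exact_mod_cast hp2
    set pr : ℝ := (p:ℝ) with hprdef
    have hpr0 : (0:ℝ) < pr := by linarith
    have hnepr : pr ≠ 0 := ne_of_gt hpr0
    have hne1 : pr + 1 ≠ 0 := by intro hcon; nlinarith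
    have hne3p : 3 * pr + 1 ≠ 0 := by intro hcon; nlinarith
    set α : ℝ := (pr - 1) / (3 * pr + 1) with hαdef
    have hα0 : (0:ℝ) ≤ α := by rw [hαdef]; apply div_nonneg <;> linarith
    set γ : ℝ := (3 * pr + 1) / (pr + 1) with hγdef
    have hγ0 : (0:ℝ) < γ := by rw [hγdef]; apply div_pos <;> linarith
    set q : ℝ := (pr + 1) / 2 with hqdef
    have hq0p : (0:ℝ) < q := by rw [hqdef]; linarith
    have hq1 : (1:ℝ) ≤ q := by rw [hqdef]; linarith
    set Q : ℝ := (3 * pr + 1) / 2 with hQdef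
    have hQ0 : (0:ℝ) < Q := by rw [hQdef]; linarith
    have hqγ : q * γ = Q := by
      rw [hqdef, hγdef, hQdef]; field_simp [hne1]; try ring; try tauto
    have hQα : Q * α = q - 1 := by
      rw [hQdef, hαdef, hqdef]; field_simp [hne3p]; try ring
    have hqαγ : q * (α * γ) = q - 1 := by
      rw [hqdef, hαdef, hγdef]; field_simp [hne3p, hne1]; try ring
    have h1αγq : (1 - α * γ) * q = 1 := by
      rw [hqdef, hαdef, hγdef]; field_simp [hne3p, hne1]; try ring
    set c : ℝ := 1 / 4 * (1 / H) ^ ((1:ℝ) / pr) *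
      (H ^ ((1:ℝ) / pr) * R0 ^ 2) ^ (-((pr - 1) / (pr + 1))) with hcdef
    have hc0 : (0:ℝ) < c := by rw [hcdef]; positivity
    set Cg : ℝ := ((1:ℝ) / 4) ^ q * H⁻¹ * R0 ^ (-(pr - 1)) with hCgdef
    have hCg0 : (0:ℝ) < Cg := by rw [hCgdef]; positivity
    have hCc : c ^ q = Cg := by
      rw [hcdef, hCgdef]
      have h3 : ((H ^ ((1:ℝ) / pr) * R0 ^ 2) ^ (-((pr - 1) / (pr + 1)))) ^ q
          = H ^ (-((pr - 1) / (2 * pr))) * R0 ^ (-(pr - 1)) := by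
        rw [← Real.rpow_mul (by positivity),
          show (-((pr - 1) / (pr + 1))) * q = -((pr - 1) / 2) from by
            rw [hqdef]; field_simp [hne1]; try ring; try tauto,
          Real.mul_rpow (Real.rpow_nonneg hH.le _) (by positivity),
          ← Real.rpow_mul hH.le, ← Real.rpow_natCast R0 2, ← Real.rpow_mul hR0.le]
        congr 1
        · congr 1
          rw [show (1:ℝ) / pr * -((pr - 1) / 2) = -((pr - 1) / (2 * pr)) from by
            field_simp [hnepr]; try ring; try tauto]
        · congr 1
          push_cast; ring
      rw [Real.mul_rpow (by positivity) (by positivity),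
        Real.mul_rpow (by positivity) (by positivity),
        ← Real.rpow_mul (by positivity : (0:ℝ) ≤ 1 / H), h3,
        one_div H, Real.inv_rpow hH.le, ← Real.rpow_neg hH.le]
      have hH2 : H ^ (-((1:ℝ) / pr * q)) * H ^ (-((pr - 1) / (2 * pr))) = H⁻¹ := by
        rw [← Real.rpow_add hH,
          show -((1:ℝ) / pr * q) + -((pr - 1) / (2 * pr)) = -1 from by
            rw [hqdef]; field_simp [hnepr]; try ring,
          Real.rpow_neg_one]
      rw [← hH2]; ring
    have hmulCg : c * Cg ^ (α * γ) = Cg := by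
      rw [← hCc, ← Real.rpow_mul hc0.le, hqαγ]
      nth_rewrite 1 [← Real.rpow_one c]
      rw [← Real.rpow_add hc0, show (1:ℝ) + (q - 1) = q from by ring]
    have key : ∀ k : ℕ, 1 ≤ k → Cg * (1 + 2 * ((k:ℝ) - 1) / (pr + 1)) ^ Q ≤ A k := by
      intro k
      induction k using Nat.strong_induction_on with
      | _ k ih =>
        intro hk1
        rcases eq_or_lt_of_le hk1 with hk1' | hk2
        · -- k = 1
          subst hk1'
          rw [show (1 + 2 * (((1:ℕ):ℝ) - 1) / (pr + 1)) = (1:ℝ) from by norm_num,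
            Real.one_rpow, mul_one]
          have hm := hmaster 1 le_rfl
          rw [Finset.sum_range_one] at hm
          have hA1 : 0 < A 1 := hApos 0
          rw [← Real.rpow_mul hA1.le] at hm
          have h2 : c * A 1 ^ (α * γ) ≤ A 1 ^ (1 - α * γ) * A 1 ^ (α * γ) := by
            rw [← Real.rpow_add hA1, show (1 - α * γ) + α * γ = (1:ℝ) from by ring,
              Real.rpow_one]
            exact hm
          have h3 : c ≤ A 1 ^ (1 - α * γ) :=
            le_of_mul_le_mul_right h2 (Real.rpow_pos_of_pos hA1 _)
          have h4 := Real.rpow_le_rpow hc0.le h3 (by linarith : (0:ℝ) ≤ q)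
          rw [← Real.rpow_mul hA1.le, h1αγq, Real.rpow_one] at h4
          rw [← hCc]
          exact h4
        · -- k ≥ 2
          obtain ⟨n, rfl⟩ : ∃ n, k = n + 1 := ⟨k - 1, by omega⟩
          have hn1 : 1 ≤ n := by omega
          have hn1r : (1:ℝ) ≤ (n:ℝ) := by exact_mod_cast hn1
          rw [show (1 + 2 * (((n+1:ℕ):ℝ) - 1) / (pr + 1)) = 1 + (n:ℝ) / q from by
            push_cast; rw [hqdef, div_div_eq_mul_div]; ring]
          have hv1 : (1:ℝ) ≤ 1 + ((n:ℝ) - 1) / q := by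
            have : 0 ≤ ((n:ℝ) - 1) / q := div_nonneg (by linarith) hq0p.le
            linarith
          have hv0 : (0:ℝ) ≤ 1 + ((n:ℝ) - 1) / q := by linarith
          have huu1 : (1:ℝ) ≤ 1 + (n:ℝ) / q := by
            have : 0 ≤ (n:ℝ) / q := div_nonneg (by linarith) hq0p.le
            linarith
          -- termwise lower bound
          have hterm_lb : ∀ i, i < n →
              Cg ^ α * (1 + (i:ℝ) / q) ^ (q - 1) ≤ (A (i+1)) ^ α := by
            intro i hi
            have hih := ih (i+1) (by omega) (by omega)
            rw [show (1 + 2 * (((i+1:ℕ):ℝ) - 1) / (pr + 1)) = 1 + (i:ℝ) / q from by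
              push_cast; rw [hqdef, div_div_eq_mul_div]; ring] at hih
            have hb0 : (0:ℝ) ≤ 1 + (i:ℝ) / q := by positivity
            have h01 : (0:ℝ) ≤ Cg * (1 + (i:ℝ) / q) ^ Q := by
              exact mul_nonneg hCg0.le (Real.rpow_nonneg hb0 _)
            have hr := Real.rpow_le_rpow h01 hih hα0
            rw [Real.mul_rpow hCg0.le (Real.rpow_nonneg hb0 _),
              ← Real.rpow_mul hb0, hQα] at hr
            exact hr
          have hsum_lb : Cg ^ α * (1 + ((n:ℝ) - 1) / q) ^ q ≤
              ∑ i ∈ Finset.range n, (A (i+1)) ^ α := by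
            calc Cg ^ α * (1 + ((n:ℝ) - 1) / q) ^ q
                ≤ Cg ^ α * ∑ i ∈ Finset.range n, (1 + (i:ℝ) / q) ^ (q - 1) := by
                  apply mul_le_mul_of_nonneg_left ?_ (Real.rpow_nonneg hCg0.le _)
                  have hsf := stmt7_sumf hq1 (n - 1)
                  rw [show n - 1 + 1 = n from by omega,
                    show ((n - 1:ℕ):ℝ) = (n:ℝ) - 1 from by
                      rw [Nat.cast_sub hn1, Nat.cast_one]] at hsf
                  exact hsf
              _ ≤ ∑ i ∈ Finset.range n, (A (i+1)) ^ α := by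
                  rw [Finset.mul_sum]
                  exact Finset.sum_le_sum fun i hi =>
                    hterm_lb i (Finset.mem_range.mp hi)
          have hm := hmaster (n+1) (by omega)
          rw [Finset.sum_range_succ] at hm
          have hAn1 : 0 < A (n+1) := hApos n
          have hAα : (0:ℝ) ≤ (A (n+1)) ^ α := Real.rpow_nonneg hAn1.le _
          -- first lower bound : Cg * v^Q ≤ A (n+1)
          have hSv : Cg ^ α * (1 + ((n:ℝ) - 1) / q) ^ q ≤
              (∑ i ∈ Finset.range n, (A (i+1)) ^ α) + (A (n+1)) ^ α :=
            le_trans hsum_lb (le_add_of_nonneg_right hAα)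
          have hvq0 : (0:ℝ) ≤ Cg ^ α * (1 + ((n:ℝ) - 1) / q) ^ q :=
            mul_nonneg (Real.rpow_nonneg hCg0.le _) (Real.rpow_nonneg hv0 _)
          have hlb1 : Cg * (1 + ((n:ℝ) - 1) / q) ^ Q ≤ A (n+1) := by
            have h1 := le_trans (mul_le_mul_of_nonneg_left
              (Real.rpow_le_rpow hvq0 hSv hγ0.le) hc0.le) hm
            rw [Real.mul_rpow (Real.rpow_nonneg hCg0.le _) (Real.rpow_nonneg hv0 _),
              ← Real.rpow_mul hCg0.le, ← Real.rpow_mul hv0, hqγ, ← mul_assoc,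
              hmulCg] at h1
            exact h1
          by_contra hcon
          push_neg at hcon
          set s : ℝ := (A (n+1) / Cg) ^ Q⁻¹ with hsdef
          have hsq0 : (0:ℝ) < A (n+1) / Cg := div_pos hAn1 hCg0
          have hsQ : Cg * s ^ Q = A (n+1) := by
            rw [hsdef, ← Real.rpow_mul hsq0.le, inv_mul_cancel₀ hQ0.ne', Real.rpow_one,
              mul_comm, div_mul_cancel₀ _ hCg0.ne']
          have hs0 : (0:ℝ) ≤ s := Real.rpow_nonneg hsq0.le _
          have hvs : 1 + ((n:ℝ) - 1) / q ≤ s := by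
            by_contra hvs'
            push_neg at hvs'
            have h := Real.rpow_lt_rpow hs0 hvs' hQ0
            have h2 := mul_lt_mul_of_pos_left h hCg0
            rw [hsQ] at h2
            linarith
          have hsu : s < 1 + (n:ℝ) / q := by
            by_contra hsu'
            push_neg at hsu'
            have h := Real.rpow_le_rpow (by positivity) hsu' hQ0.le
            have h2 := mul_le_mul_of_nonneg_left h hCg0.le
            rw [hsQ] at h2
            linarith
          have hs1 : (1:ℝ) ≤ s := le_trans hv1 hvs
          have hineq : (1 + ((n:ℝ) - 1) / q) ^ q + s ^ (q - 1) ≤ s ^ q := by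
            have hAα_eq : (A (n+1)) ^ α = Cg ^ α * s ^ (q - 1) := by
              rw [← hsQ, Real.mul_rpow hCg0.le (Real.rpow_nonneg hs0 _),
                ← Real.rpow_mul hs0, hQα]
            have hadd0 : (0:ℝ) ≤ (1 + ((n:ℝ) - 1) / q) ^ q + s ^ (q - 1) :=
              add_nonneg (Real.rpow_nonneg hv0 _) (Real.rpow_nonneg hs0 _)
            have hS2 : Cg ^ α * ((1 + ((n:ℝ) - 1) / q) ^ q + s ^ (q - 1)) ≤
                (∑ i ∈ Finset.range n, (A (i+1)) ^ α) + (A (n+1)) ^ α := by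
              rw [mul_add, hAα_eq]
              exact add_le_add_left hsum_lb _
            have h1 := le_trans (mul_le_mul_of_nonneg_left
              (Real.rpow_le_rpow (mul_nonneg (Real.rpow_nonneg hCg0.le _) hadd0)
                hS2 hγ0.le) hc0.le) hm
            rw [Real.mul_rpow (Real.rpow_nonneg hCg0.le _) hadd0,
              ← Real.rpow_mul hCg0.le, ← mul_assoc, hmulCg, ← hsQ] at h1
            have h3 : ((1 + ((n:ℝ) - 1) / q) ^ q + s ^ (q - 1)) ^ γ ≤ (s ^ q) ^ γ := by
              have h4 := le_of_mul_le_mul_left h1 hCg0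
              rwa [← hqγ, Real.rpow_mul hs0] at h4
            by_contra hfin
            push_neg at hfin
            have h5 := Real.rpow_lt_rpow (Real.rpow_nonneg hs0 _) hfin hγ0
            linarith
          have hb := stmt7_bern hq1 huu1
          rw [show (1 + (n:ℝ) / q) - 1 / q = 1 + ((n:ℝ) - 1) / q from by ring] at hb
          have hmono := stmt7_hmono hq1 hs1 hsu
          linarith
    intro k hk
    exact key k hk
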